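/- arXiv:2404.12989 — 2 statements merged into one kernel-verified Lean document; each statement's English description precedes it below -/
import Mathlib

section
/- If A is a p×t fully interlacing matrix and B a t×q fully interlacing matrix of formal power series over ℝ, then the product AB is fully interlacing. -/
open scoped BigOperators

/-- The coefficient of `x^n` in a power series, for an integer `n`
(zero when `n < 0`). -/
noncomputable def intCoeff (A : PowerSeries ℝ) (n : ℤ) : ℝ :=
  if 0 ≤ n then PowerSeries.coeff (R := ℝ) n.toNat A else 0

/-- A `ℤ × ℤ` matrix is totally positive (TP) if every finite square
submatrix (rows and columns chosen in increasing order) has nonnegative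
determinant. -/
def TP (M : ℤ → ℤ → ℝ) : Prop :=
  ∀ (n : ℕ) (r c : Fin n → ℤ), StrictMono r → StrictMono c →
    0 ≤ (Matrix.of fun a b => M (r a) (c b)).det

/-- The interlacing matrix `Lace(A)` of a `p × q` matrix of formal power
series: the `(u,v)`-entry, for `u = p·u' + i` (`0 ≤ i < p`) and
`v = q·v' + j` (`0 ≤ j < q`), is the coefficient of `x^(v'-u')` in `A i j`. -/
noncomputable def lace {p q : ℕ} [NeZero p] [NeZero q]
    (A : Fin p → Fin q → PowerSeries ℝ) : ℤ → ℤ → ℝ := fun u v =>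
  intCoeff
    (A ⟨(u % (p : ℤ)).toNat, by
          have hp : (0 : ℤ) < (p : ℤ) := by
            exact_mod_cast Nat.pos_of_ne_zero (NeZero.ne p)
          have h1 := Int.emod_nonneg u hp.ne'
          have h2 := Int.emod_lt_of_pos u hp
          omega⟩
       ⟨(v % (q : ℤ)).toNat, by
          have hq : (0 : ℤ) < (q : ℤ) := by
            exact_mod_cast Nat.pos_of_ne_zero (NeZero.ne q)
          have h1 := Int.emod_nonneg v hq.ne'
          have h2 := Int.emod_lt_of_pos v hq
          omega⟩)
    (v / (q : ℤ) - u / (p : ℤ))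

/-- A matrix of formal power series is fully interlacing when its
interlacing matrix is totally positive. -/
def FullyInterlacing {p q : ℕ} [NeZero p] [NeZero q]
    (A : Fin p → Fin q → PowerSeries ℝ) : Prop :=
  TP (lace A)

/-- A sequence of power series viewed as a `p × 1` column matrix. -/
noncomputable def colMat {p : ℕ} (A : Fin p → PowerSeries ℝ) :
    Fin p → Fin 1 → PowerSeries ℝ := fun i _ => A i

/-- `A(x)` interlaces `B(x)`: the `2 × 1` column `(A, B)ᵀ` is fully
interlacing. -/
def SeriesInterlaces (A B : PowerSeries ℝ) : Prop :=
  FullyInterlacing (colMat ![A, B])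

/-- A power series is AESW (a Pólya frequency sequence) when its Toeplitz
matrix `(a_{v-u})` is totally positive. -/
def IsAESW (A : PowerSeries ℝ) : Prop :=
  TP fun u v => intCoeff A (v - u)

/-- The `k`-th Veronese `r`-section `S_k^{(r)} A(x) = ∑_{n ≥ 0} a_{k+rn} xⁿ`. -/
noncomputable def veronese (r k : ℕ) (A : PowerSeries ℝ) : PowerSeries ℝ :=
  PowerSeries.mk fun n => PowerSeries.coeff (R := ℝ) (k + r * n) A


open Finset Equiv Matrix Function

/-- The summand in the expansion of `det (M * N)` over column choices. -/
noncomputable def cbF {n m : ℕ} (M : Matrix (Fin n) (Fin m) ℝ) (N : Matrix (Fin m) (Fin n) ℝ)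
    (p : Fin n → Fin m) : ℝ :=
  ∑ σ : Equiv.Perm (Fin n), (Equiv.Perm.sign σ : ℝ) * ∏ i, M (σ i) (p i) * N (p i) i

theorem cbF_eq_zero {n m : ℕ} (M : Matrix (Fin n) (Fin m) ℝ) (N : Matrix (Fin m) (Fin n) ℝ)
    {p : Fin n → Fin m} (H : ¬Function.Injective p) : cbF M N p = 0 := by
  obtain ⟨i, j, hpij, hij⟩ : ∃ i j, p i = p j ∧ i ≠ j := by
    rw [Function.Injective] at H
    push_neg at H
    obtain ⟨i, j, h1, h2⟩ := H
    exact ⟨i, j, h1, h2⟩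
  exact Finset.sum_involution (fun σ _ => σ * Equiv.swap i j)
    (fun σ _ => by
      have : (∏ x, M (σ x) (p x)) = ∏ x, M ((σ * Equiv.swap i j) x) (p x) :=
        Fintype.prod_equiv (Equiv.swap i j) _ _ (by simp [Equiv.apply_swap_eq_self hpij])
      simp [this, Equiv.Perm.sign_swap hij, -Equiv.Perm.sign_swap', Finset.prod_mul_distrib])
    (fun σ _ _ => (not_congr Equiv.mul_swap_eq_iff).mpr hij) (fun _ _ => Finset.mem_univ _)
    fun σ _ => Equiv.mul_swap_involutive i j σ

theorem det_mul_expand {n m : ℕ} (M : Matrix (Fin n) (Fin m) ℝ) (N : Matrix (Fin m) (Fin n) ℝ) :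
    (M * N).det = ∑ p ∈ Finset.univ.filter (fun p : Fin n → Fin m => Function.Injective p),
      cbF M N p := by
  have h1 : (M * N).det = ∑ p : Fin n → Fin m, cbF M N p := by
    unfold cbF
    simp only [Matrix.det_apply', Matrix.mul_apply, Finset.prod_univ_sum, Finset.mul_sum,
      Fintype.piFinset_univ]
    rw [Finset.sum_comm]
  rw [h1]
  refine (Finset.sum_subset (Finset.filter_subset _ _) fun f _ hbij => ?_).symm
  exact cbF_eq_zero M N (by simpa using hbij)


theorem det_det_eq_sum_perm {n m : ℕ} (M : Matrix (Fin n) (Fin m) ℝ)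
    (N : Matrix (Fin m) (Fin n) ℝ) (e : Fin n → Fin m) :
    (Matrix.of fun a b => M a (e b)).det * (Matrix.of fun a b => N (e a) b).det
      = ∑ τ : Equiv.Perm (Fin n), cbF M N (e ∘ τ) := by
  rw [← Matrix.det_mul, det_mul_expand]
  refine Finset.sum_bij'
    (i := fun p (hp : p ∈ Finset.univ.filter fun p : Fin n → Fin n => Function.Injective p) =>
      Equiv.ofBijective p (Finite.injective_iff_bijective.mp (by simpa using hp)))
    (j := fun τ _ => (τ : Fin n → Fin n)) ?_ ?_ ?_ ?_ ?_
  · intro a ha; exact Finset.mem_univ _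
  · intro τ _; simp [τ.injective]
  · intro a ha; rfl
  · intro τ _; exact Equiv.ext fun x => rfl
  · intro p hp
    unfold cbF
    rfl

theorem inner_group {n m : ℕ} (M : Matrix (Fin n) (Fin m) ℝ) (N : Matrix (Fin m) (Fin n) ℝ)
    (s : Finset (Fin m)) (hs : s.card = n) :
    ∑ p ∈ (Finset.univ.filter fun p : Fin n → Fin m => Function.Injective p).filter
        (fun p => Finset.image p Finset.univ = s), cbF M N p
      = ∑ τ : Equiv.Perm (Fin n), cbF M N ((s.orderEmbOfFin hs) ∘ τ) := by
  have key : ∀ (p : Fin n → Fin m) (him : Finset.image p Finset.univ = s) (x : Fin n),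
      (s.orderEmbOfFin hs) ((s.orderIsoOfFin hs).symm
        ⟨p x, by rw [← him]; exact Finset.mem_image_of_mem _ (Finset.mem_univ x)⟩) = p x := by
    intro p him x
    rw [← Finset.coe_orderIsoOfFin_apply]
    simp
  refine Finset.sum_bij'
    (i := fun p hp => Equiv.ofBijective
      (fun x => (s.orderIsoOfFin hs).symm ⟨p x, by
        have him : Finset.image p Finset.univ = s := (Finset.mem_filter.mp hp).2
        rw [← him]; exact Finset.mem_image_of_mem _ (Finset.mem_univ x)⟩)
      (Finite.injective_iff_bijective.mp (by
        have hinj : Function.Injective p := by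
          have := (Finset.mem_filter.mp (Finset.mem_filter.mp hp).1).2
          exact this
        intro x y hxy
        apply hinj
        have := congrArg (fun z => ((s.orderIsoOfFin hs) z : Fin m)) hxy
        simpa using this)))
    (j := fun τ _ => (s.orderEmbOfFin hs) ∘ τ) ?_ ?_ ?_ ?_ ?_
  · intro a ha; exact Finset.mem_univ _
  · intro τ _
    refine Finset.mem_filter.mpr ⟨Finset.mem_filter.mpr ⟨Finset.mem_univ _, ?_⟩, ?_⟩
    · exact (s.orderEmbOfFin hs).injective.comp τ.injective
    · ext x
      simp only [Finset.mem_image, Finset.mem_univ, true_and, Function.comp_apply]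
      constructor
      · rintro ⟨i, rfl⟩; exact Finset.orderEmbOfFin_mem s hs _
      · intro hx
        obtain ⟨k, hk⟩ : ∃ k, s.orderEmbOfFin hs k = x := by
          have := Finset.range_orderEmbOfFin s hs
          have hx' : x ∈ Set.range (s.orderEmbOfFin hs) := by rw [this]; exact hx
          exact hx'
        exact ⟨τ.symm k, by simp [hk]⟩
  · intro p hp
    funext x
    exact key p (Finset.mem_filter.mp hp).2 x
  · intro τ _
    refine Equiv.ext fun x => ?_
    have : (s.orderIsoOfFin hs) (τ x)
        = ⟨(s.orderEmbOfFin hs) (τ x), Finset.orderEmbOfFin_mem s hs _⟩ :=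
      Subtype.ext (Finset.coe_orderIsoOfFin_apply s hs (τ x))
    simp only [Equiv.ofBijective_apply, Function.comp_apply]
    rw [OrderIso.symm_apply_eq]
    exact this.symm
  · intro p hp
    have hfun : (s.orderEmbOfFin hs) ∘ (fun x => (s.orderIsoOfFin hs).symm
        ⟨p x, by
          have him : Finset.image p Finset.univ = s := (Finset.mem_filter.mp hp).2
          rw [← him]; exact Finset.mem_image_of_mem _ (Finset.mem_univ x)⟩) = p := by
      funext x
      exact key p (Finset.mem_filter.mp hp).2 x
    exact (congrArg (cbF M N) hfun).symm

theorem cauchyBinet {n m : ℕ} (M : Matrix (Fin n) (Fin m) ℝ) (N : Matrix (Fin m) (Fin n) ℝ) :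
    (M * N).det = ∑ s : {s : Finset (Fin m) // s.card = n},
      (Matrix.of fun a b => M a (s.1.orderEmbOfFin s.2 b)).det *
      (Matrix.of fun a b => N (s.1.orderEmbOfFin s.2 a) b).det := by
  rw [det_mul_expand]
  rw [← Finset.sum_fiberwise_of_maps_to (t := Finset.univ.powersetCard n)
    (g := fun p : Fin n → Fin m => Finset.image p Finset.univ)
    (fun p hp => by
      rw [Finset.mem_powersetCard_univ]
      rw [Finset.card_image_of_injective _ (by simpa using hp)]
      simp) (cbF M N)]
  rw [Finset.sum_subtype (Finset.univ.powersetCard n)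
    (fun x => Finset.mem_powersetCard_univ) (fun y =>
      ∑ p ∈ (Finset.univ.filter fun p : Fin n → Fin m => Function.Injective p).filter
        (fun p => Finset.image p Finset.univ = y), cbF M N p)]
  refine Finset.sum_congr rfl fun s _ => ?_
  rw [inner_group M N s.1 s.2, det_det_eq_sum_perm]


lemma intCoeff_sum {ι : Type*} (s : Finset ι) (f : ι → PowerSeries ℝ) (d : ℤ) :
    intCoeff (∑ k ∈ s, f k) d = ∑ k ∈ s, intCoeff (f k) d := by
  unfold intCoeff
  split
  · simp
  · simp

lemma intCoeff_of_neg {F : PowerSeries ℝ} {d : ℤ} (h : d < 0) : intCoeff F d = 0 := by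
  unfold intCoeff
  rw [if_neg (by omega)]

lemma intCoeff_mul (F G : PowerSeries ℝ) (u' v' lo hi : ℤ) (h1 : lo ≤ u') (h2 : v' < hi) :
    intCoeff (F * G) (v' - u')
      = ∑ w' ∈ Finset.Ico lo hi, intCoeff F (w' - u') * intCoeff G (v' - w') := by
  have hsub : Finset.Ico u' (v' + 1) ⊆ Finset.Ico lo hi := by
    intro x hx
    simp only [Finset.mem_Ico] at *
    omega
  rw [← Finset.sum_subset hsub (by
    intro x hx hxn
    simp only [Finset.mem_Ico] at hx hxn
    rcases lt_or_ge x u' with h | h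
    · rw [intCoeff_of_neg (by omega), zero_mul]
    · rw [intCoeff_of_neg (show v' - x < 0 by omega), mul_zero])]
  rcases lt_or_ge v' u' with hvu | huv
  · rw [Finset.Ico_eq_empty (by omega), Finset.sum_empty, intCoeff_of_neg (by omega)]
  · set N : ℕ := (v' - u').toNat with hN
    have hLHS : intCoeff (F * G) (v' - u') = PowerSeries.coeff N (F * G) := by
      unfold intCoeff
      rw [if_pos (by omega)]
    rw [hLHS, PowerSeries.coeff_mul, Finset.Nat.sum_antidiagonal_eq_sum_range_succ_mk]
    refine Finset.sum_nbij' (fun k => u' + (k : ℤ)) (fun w => (w - u').toNat) ?_ ?_ ?_ ?_ ?_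
    · intro k hk
      simp only [Finset.mem_range] at hk
      simp only [Finset.mem_Ico]
      omega
    · intro w hw
      simp only [Finset.mem_Ico] at hw
      simp only [Finset.mem_range]
      omega
    · intro k hk; simp only [Finset.mem_range] at hk; omega
    · intro w hw; simp only [Finset.mem_Ico] at hw; omega
    · intro k hk
      dsimp only
      simp only [Finset.mem_range] at hk
      unfold intCoeff
      rw [if_pos (by omega), if_pos (by omega)]
      have e1 : ((u' + (k : ℤ)) - u').toNat = k := by omega
      have e2 : (v' - (u' + (k : ℤ))).toNat = N - k := by omega
      rw [e1, e2]

lemma lace_eq {p q : ℕ} [NeZero p] [NeZero q] (A : Fin p → Fin q → PowerSeries ℝ)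
    (u v : ℤ) (i : Fin p) (j : Fin q) (hi : (i : ℤ) = u % (p : ℤ)) (hj : (j : ℤ) = v % (q : ℤ)) :
    lace A u v = intCoeff (A i j) (v / (q : ℤ) - u / (p : ℤ)) := by
  have hp : (0 : ℤ) < (p : ℤ) := by exact_mod_cast Nat.pos_of_ne_zero (NeZero.ne p)
  have hq : (0 : ℤ) < (q : ℤ) := by exact_mod_cast Nat.pos_of_ne_zero (NeZero.ne q)
  have h1 : (u % (p : ℤ)).toNat = (i : ℕ) := by
    have h0 : 0 ≤ u % (p : ℤ) := Int.emod_nonneg u hp.ne'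
    have := Int.toNat_of_nonneg h0
    omega
  have h2 : (v % (q : ℤ)).toNat = (j : ℕ) := by
    have h0 : 0 ≤ v % (q : ℤ) := Int.emod_nonneg v hq.ne'
    have := Int.toNat_of_nonneg h0
    omega
  simp only [lace, h1, h2, Fin.eta]

lemma lace_mul {p t q : ℕ} [NeZero p] [NeZero t] [NeZero q]
    (A : Fin p → Fin t → PowerSeries ℝ) (B : Fin t → Fin q → PowerSeries ℝ)
    (u v lo hi : ℤ) (h1 : lo ≤ u / (p : ℤ)) (h2 : v / (q : ℤ) < hi) :
    lace (fun i j => ∑ k, A i k * B k j) u v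
      = ∑ w ∈ Finset.Ico ((t : ℤ) * lo) ((t : ℤ) * hi), lace A u w * lace B w v := by
  have hp : (0 : ℤ) < (p : ℤ) := by exact_mod_cast Nat.pos_of_ne_zero (NeZero.ne p)
  have ht : (0 : ℤ) < (t : ℤ) := by exact_mod_cast Nat.pos_of_ne_zero (NeZero.ne t)
  have hq : (0 : ℤ) < (q : ℤ) := by exact_mod_cast Nat.pos_of_ne_zero (NeZero.ne q)
  set iu : Fin p := ⟨(u % (p : ℤ)).toNat, by
    have h1 := Int.emod_nonneg u hp.ne'
    have h2 := Int.emod_lt_of_pos u hp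
    omega⟩ with hiu
  set jv : Fin q := ⟨(v % (q : ℤ)).toNat, by
    have h1 := Int.emod_nonneg v hq.ne'
    have h2 := Int.emod_lt_of_pos v hq
    omega⟩ with hjv
  have hiu' : ((iu : ℕ) : ℤ) = u % (p : ℤ) := by
    have h0 : 0 ≤ u % (p : ℤ) := Int.emod_nonneg u hp.ne'
    simp [hiu, Int.toNat_of_nonneg h0]
  have hjv' : ((jv : ℕ) : ℤ) = v % (q : ℤ) := by
    have h0 : 0 ≤ v % (q : ℤ) := Int.emod_nonneg v hq.ne'
    simp [hjv, Int.toNat_of_nonneg h0]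
  -- facts about div/mod of t*w' + k
  have hdiv : ∀ (w' : ℤ) (k : Fin t), ((t : ℤ) * w' + (k : ℤ)) / (t : ℤ) = w' := by
    intro w' k
    have hk0 : (0 : ℤ) ≤ (k : ℤ) := by positivity
    have hkt : ((k : ℕ) : ℤ) < (t : ℤ) := by exact_mod_cast k.isLt
    rw [add_comm, Int.add_mul_ediv_left _ _ ht.ne']
    rw [Int.ediv_eq_zero_of_lt hk0 hkt, zero_add]
  have hmod : ∀ (w' : ℤ) (k : Fin t), ((t : ℤ) * w' + (k : ℤ)) % (t : ℤ) = (k : ℤ) := by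
    intro w' k
    have hk0 : (0 : ℤ) ≤ (k : ℤ) := by positivity
    have hkt : ((k : ℕ) : ℤ) < (t : ℤ) := by exact_mod_cast k.isLt
    rw [add_comm, Int.add_mul_emod_self_left, Int.emod_eq_of_lt hk0 hkt]
  -- reindex the RHS
  have hre : ∑ w ∈ Finset.Ico ((t : ℤ) * lo) ((t : ℤ) * hi), lace A u w * lace B w v
      = ∑ x ∈ Finset.Ico lo hi ×ˢ (Finset.univ : Finset (Fin t)),
          lace A u ((t : ℤ) * x.1 + (x.2 : ℤ)) * lace B ((t : ℤ) * x.1 + (x.2 : ℤ)) v := by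
    refine Finset.sum_nbij'
      (fun w => (w / (t : ℤ), ⟨(w % (t : ℤ)).toNat, by
        have h1 := Int.emod_nonneg w ht.ne'
        have h2 := Int.emod_lt_of_pos w ht
        omega⟩))
      (fun x => (t : ℤ) * x.1 + (x.2 : ℤ)) ?_ ?_ ?_ ?_ ?_
    · intro w hw
      simp only [Finset.mem_Ico] at hw
      simp only [Finset.mem_product, Finset.mem_Ico, Finset.mem_univ, and_true]
      constructor
      · rw [Int.le_ediv_iff_mul_le ht, mul_comm]; exact hw.1
      · rw [Int.ediv_lt_iff_lt_mul ht, mul_comm]; exact hw.2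
    · intro x hx
      simp only [Finset.mem_product, Finset.mem_Ico, Finset.mem_univ, and_true] at hx
      simp only [Finset.mem_Ico]
      have hk0 : (0 : ℤ) ≤ (x.2 : ℤ) := by positivity
      have hkt : ((x.2 : ℕ) : ℤ) < (t : ℤ) := by exact_mod_cast x.2.isLt
      constructor
      · have : (t : ℤ) * lo ≤ (t : ℤ) * x.1 := by
          exact mul_le_mul_of_nonneg_left hx.1 ht.le
        omega
      · have : (t : ℤ) * (x.1 + 1) ≤ (t : ℤ) * hi := by
          exact mul_le_mul_of_nonneg_left (by omega) ht.le
        have : (t : ℤ) * x.1 + (x.2 : ℤ) < (t : ℤ) * (x.1 + 1) := by ring_nf; omega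
        omega
    · intro w hw
      dsimp only
      have hmod0 : 0 ≤ w % (t : ℤ) := Int.emod_nonneg w ht.ne'
      have := Int.mul_ediv_add_emod w (t : ℤ)
      have htn : (((w % (t : ℤ)).toNat : ℕ) : ℤ) = w % (t : ℤ) := Int.toNat_of_nonneg hmod0
      omega
    · intro x hx
      obtain ⟨w', k⟩ := x
      dsimp only
      refine Prod.ext ?_ ?_
      · exact hdiv w' k
      · refine Fin.ext ?_
        have := hmod w' k
        have h0 : 0 ≤ ((t : ℤ) * w' + (k : ℤ)) % (t : ℤ) :=
          Int.emod_nonneg _ ht.ne'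
        dsimp only
        omega
    · intro w hw
      dsimp only
      have hmod0 : 0 ≤ w % (t : ℤ) := Int.emod_nonneg w ht.ne'
      have htn : (((w % (t : ℤ)).toNat : ℕ) : ℤ) = w % (t : ℤ) := Int.toNat_of_nonneg hmod0
      have hw' : (t : ℤ) * (w / (t : ℤ)) + (((w % (t : ℤ)).toNat : ℕ) : ℤ) = w := by
        have := Int.mul_ediv_add_emod w (t : ℤ)
        omega
      rw [hw']
  rw [lace_eq (fun i j => ∑ k, A i k * B k j) u v iu jv hiu' hjv']
  rw [intCoeff_sum, hre, Finset.sum_product, Finset.sum_comm]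
  refine Finset.sum_congr rfl fun k _ => ?_
  rw [intCoeff_mul (A iu k) (B k jv) (u / (p : ℤ)) (v / (q : ℤ)) lo hi h1 h2]
  refine Finset.sum_congr rfl fun w' _ => ?_
  rw [lace_eq A u ((t : ℤ) * w' + (k : ℤ)) iu k hiu' (hmod w' k).symm,
    lace_eq B ((t : ℤ) * w' + (k : ℤ)) v k jv (hmod w' k).symm hjv', hdiv w' k]

lemma sum_Ico_fin (a b : ℤ) (f : ℤ → ℝ) :
    ∑ x ∈ Finset.Ico a b, f x = ∑ k : Fin (b - a).toNat, f (a + (k : ℤ)) := by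
  refine Finset.sum_bij'
    (i := fun x (hx : x ∈ Finset.Ico a b) => (⟨(x - a).toNat, by
      simp only [Finset.mem_Ico] at hx; omega⟩ : Fin (b - a).toNat))
    (j := fun k _ => a + (k : ℤ)) ?_ ?_ ?_ ?_ ?_
  · intro x hx; exact Finset.mem_univ _
  · intro k _
    simp only [Finset.mem_Ico]
    have := k.isLt
    omega
  · intro x hx
    simp only [Finset.mem_Ico] at hx
    dsimp only
    omega
  · intro k _
    refine Fin.ext ?_
    dsimp only
    omega
  · intro x hx
    simp only [Finset.mem_Ico] at hx
    dsimp only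
    congr 1
    omega

/-- Products of fully interlacing matrices of formal power series are
fully interlacing. -/
theorem stmt5 {p t q : ℕ} [NeZero p] [NeZero t] [NeZero q]
    (A : Fin p → Fin t → PowerSeries ℝ) (B : Fin t → Fin q → PowerSeries ℝ)
    (hA : FullyInterlacing A) (hB : FullyInterlacing B) :
    FullyInterlacing fun i j => ∑ k, A i k * B k j := by
  intro n r c hr hc
  rcases Nat.eq_zero_or_pos n with hn | hn
  · subst hn
    simp [Matrix.det_fin_zero]
  · have hp : (0 : ℤ) < (p : ℤ) := by exact_mod_cast Nat.pos_of_ne_zero (NeZero.ne p)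
    have hq : (0 : ℤ) < (q : ℤ) := by exact_mod_cast Nat.pos_of_ne_zero (NeZero.ne q)
    set lo : ℤ := r ⟨0, hn⟩ / (p : ℤ) with hlo
    set hi : ℤ := c ⟨n - 1, by omega⟩ / (q : ℤ) + 1 with hhi
    set m : ℕ := ((t : ℤ) * hi - (t : ℤ) * lo).toNat with hm
    set w : Fin m → ℤ := fun k => (t : ℤ) * lo + (k : ℤ) with hwdef
    have hw : StrictMono w := by
      intro a b hab
      simp only [hwdef]
      have : ((a : ℕ) : ℤ) < ((b : ℕ) : ℤ) := by exact_mod_cast hab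
      omega
    have hentry : ∀ a b, lace (fun i j => ∑ k, A i k * B k j) (r a) (c b)
        = ∑ k : Fin m, lace A (r a) (w k) * lace B (w k) (c b) := by
      intro a b
      rw [lace_mul A B (r a) (c b) lo hi
        (by
          rw [hlo]
          exact Int.ediv_le_ediv hp (hr.monotone (by simp [Fin.le_def])))
        (by
          rw [hhi]
          have hb : b ≤ (⟨n - 1, by omega⟩ : Fin n) := by
            have := b.isLt
            simp only [Fin.le_def]
            omega
          have := Int.ediv_le_ediv hq (hc.monotone hb)
          omega)]
      rw [sum_Ico_fin]
    have hM : (Matrix.of fun a b => lace (fun i j => ∑ k, A i k * B k j) (r a) (c b))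
        = (Matrix.of fun a k => lace A (r a) (w k)) * (Matrix.of fun k b => lace B (w k) (c b)) := by
      ext a b
      rw [Matrix.mul_apply]
      exact hentry a b
    rw [hM, cauchyBinet]
    refine Finset.sum_nonneg fun s _ => mul_nonneg ?_ ?_
    · exact hA n r (fun i => w (s.1.orderEmbOfFin s.2 i)) hr
        (hw.comp (s.1.orderEmbOfFin s.2).strictMono)
    · exact hB n (fun i => w (s.1.orderEmbOfFin s.2 i)) c
        (hw.comp (s.1.orderEmbOfFin s.2).strictMono) hc
end

section
/- If A(x) ∈ ℝ[[x]] is an AESW series (its Toeplitz matrix is totally positive) and r is a positive integer, then every Veronese r-section S_k^{(r)}A(x) (0 ≤ k < r) is also an AESW series, and moreover the row vector (S_0^{(r)}A, S_1^{(r)}A, ..., S_{r-1}^{(r)}A) is a fully interlacing 1×r matrix. -/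
open scoped BigOperators

lemma intCoeff_veronese (A : PowerSeries ℝ) (r k : ℕ) (hk : k < r) (m : ℤ) :
    intCoeff (veronese r k A) m = intCoeff A ((k : ℤ) + r * m) := by
  unfold intCoeff veronese
  rcases le_or_gt 0 m with hm | hm
  · lift m to ℕ using hm
    have hkr : (0 : ℤ) ≤ (k : ℤ) + r * (m : ℤ) := by positivity
    rw [if_pos (by positivity), if_pos hkr, PowerSeries.coeff_mk]
    first
    | rfl
    | (congr 1
       rw [show ((k : ℤ) + r * (m : ℤ)) = ((k + r * m : ℕ) : ℤ) by push_cast; ring,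
         Int.toNat_natCast, Int.toNat_natCast])
  · have hr : (1 : ℤ) ≤ (r : ℤ) := by exact_mod_cast (by omega : 1 ≤ r)
    have : (k : ℤ) + r * m < 0 := by nlinarith [hm, (by exact_mod_cast hk : (k : ℤ) < r)]
    rw [if_neg (not_le.mpr hm), if_neg (not_le.mpr this)]

/-- Every Veronese `r`-section of an AESW series is AESW; moreover the row
vector `(S₀^{(r)}A, S₁^{(r)}A, …, S_{r-1}^{(r)}A)` is a fully interlacing
`1 × r` matrix. -/
theorem stmt15 (A : PowerSeries ℝ) (hA : IsAESW A) (r : ℕ) [NeZero r] :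
    (∀ k : Fin r, IsAESW (veronese r (k : ℕ) A)) ∧
    FullyInterlacing fun (_ : Fin 1) (k : Fin r) => veronese r (k : ℕ) A := by
  have hr : (0 : ℤ) < (r : ℤ) := by
    exact_mod_cast Nat.pos_of_ne_zero (NeZero.ne r)
  constructor
  · intro k n row col hrow hcol
    have hrow' : StrictMono fun a => (r : ℤ) * row a := fun a b hab => by
      have := hrow hab; exact mul_lt_mul_of_pos_left this hr
    have hcol' : StrictMono fun b => (k : ℤ) + (r : ℤ) * col b := fun a b hab => by
      have := hcol hab; have := mul_lt_mul_of_pos_left this hr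
      simp only []; linarith
    have := hA n (fun a => (r : ℤ) * row a) (fun b => (k : ℤ) + (r : ℤ) * col b) hrow' hcol'
    convert this using 2
    funext a b
    simp only [Matrix.of_apply]
    rw [intCoeff_veronese A r k k.isLt]
    congr 1
    ring
  · intro n row col hrow hcol
    have hrow' : StrictMono fun a => (r : ℤ) * row a := fun a b hab => by
      have := hrow hab; exact mul_lt_mul_of_pos_left this hr
    have := hA n (fun a => (r : ℤ) * row a) col hrow' hcol
    convert this using 2
    funext a b
    simp only [Matrix.of_apply, lace]
    rw [intCoeff_veronese A r ((col b % (r : ℤ)).toNat)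
      (by have h1 := Int.emod_nonneg (col b) hr.ne'
          have h2 := Int.emod_lt_of_pos (col b) hr
          omega)]
    have h1 := Int.emod_nonneg (col b) hr.ne'
    have h2 := Int.mul_ediv_add_emod (col b) (r : ℤ)
    congr 1
    have : (((col b % (r : ℤ)).toNat : ℤ)) = col b % (r : ℤ) := Int.toNat_of_nonneg h1
    rw [this]
    push_cast
    rw [Int.ediv_one, mul_sub]
    linarith [h2]
end
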